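/- Let G > 0, α > 1/2 and z = ((12α + 4)/(2α − 1))·G². Then for all A ≥ 0 and all w ≥ −G: 4·G²·w²/(A + z + 2·G·w) + 8·α·G² − (4·α + 2)·G·w − (2·α − 1)·(A + z) ≤ 0. (Note A + z + 2·G·w ≥ z − 2·G² > 0 since (12α + 4)/(2α − 1) > 2 for α > 1/2, so the expression is well defined.) -/

import Mathlib

/-- The inequality `◇ ≤ 0` verified in Case 2 of the proof of the one-step potential
bound, with `A = V + c²`, `w = S + c`, `k = 2G` and `z = ((12α+4)/(2α−1))·G²`. -/
theorem diamond_nonpos (G α : ℝ) (hG : 0 < G) (hα : 1 / 2 < α)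
    (A w : ℝ) (hA : 0 ≤ A) (hw : -G ≤ w) :
    4 * G ^ 2 * w ^ 2 / (A + ((12 * α + 4) / (2 * α - 1)) * G ^ 2 + 2 * G * w)
      + 8 * α * G ^ 2 - (4 * α + 2) * G * w
      - (2 * α - 1) * (A + ((12 * α + 4) / (2 * α - 1)) * G ^ 2) ≤ 0 := by
  have ha : 0 < 2 * α - 1 := by linarith
  set z : ℝ := ((12 * α + 4) / (2 * α - 1)) * G ^ 2 with hz'
  have hz : (2 * α - 1) * z = (12 * α + 4) * G ^ 2 := by
    rw [hz']; field_simp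
  have hu : 0 ≤ w + G := by linarith
  have hD : 0 < A + z + 2 * G * w := by
    nlinarith [sq_nonneg G, mul_nonneg (mul_nonneg ha.le hG.le) hu, mul_nonneg ha.le hA]
  have hexp : (2 * α - 1) * (A + z) = (2 * α - 1) * A + (12 * α + 4) * G ^ 2 := by
    rw [mul_add, hz]
  have hgoal : 4 * G ^ 2 * w ^ 2 ≤
      ((4 * α + 2) * G * w + (2 * α - 1) * (A + z) - 8 * α * G ^ 2)
        * (A + z + 2 * G * w) := by
    rw [hexp, ← mul_le_mul_iff_of_pos_left ha,
      show (2 * α - 1) * (((4 * α + 2) * G * w + ((2 * α - 1) * A + (12 * α + 4) * G ^ 2)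
          - 8 * α * G ^ 2) * (A + z + 2 * G * w))
        = ((4 * α + 2) * G * w + ((2 * α - 1) * A + (12 * α + 4) * G ^ 2) - 8 * α * G ^ 2)
          * ((2 * α - 1) * (A + z + 2 * G * w)) by ring,
      show (2 * α - 1) * (A + z + 2 * G * w)
        = (2 * α - 1) * A + (12 * α + 4) * G ^ 2 + 2 * (2 * α - 1) * G * w by
          linear_combination hz]
    nlinarith [mul_nonneg (mul_nonneg ha.le ha.le) (mul_nonneg (sq_nonneg G) (mul_nonneg hu hu)),
      mul_nonneg ha.le (mul_nonneg (sq_nonneg G) (mul_nonneg hu hu)),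
      mul_nonneg ha.le (mul_nonneg hA (mul_nonneg hG.le hu)),
      mul_nonneg (mul_nonneg ha.le ha.le) (mul_nonneg hA (mul_nonneg hG.le hu)),
      mul_nonneg (mul_nonneg ha.le ha.le) (mul_nonneg hA hA),
      mul_nonneg (mul_nonneg ha.le ha.le) (mul_nonneg (mul_nonneg (sq_nonneg G) hG.le) hu),
      mul_nonneg ha.le (mul_nonneg (mul_nonneg (sq_nonneg G) hG.le) hu),
      mul_nonneg (mul_nonneg (sq_nonneg G) hG.le) hu,
      mul_nonneg ha.le (mul_nonneg (sq_nonneg G) (sq_nonneg G)),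
      mul_nonneg (sq_nonneg G) (sq_nonneg G),
      mul_nonneg ha.le (mul_nonneg hA (sq_nonneg G)),
      mul_nonneg (mul_nonneg ha.le ha.le) (mul_nonneg hA (sq_nonneg G))]
  have h2 : 4 * G ^ 2 * w ^ 2 / (A + z + 2 * G * w) ≤
      (4 * α + 2) * G * w + (2 * α - 1) * (A + z) - 8 * α * G ^ 2 :=
    (div_le_iff₀ hD).mpr hgoal
  linarith
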